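/- Consider Sweedler's 4-dimensional Hopf algebra H over K (char K ≠ 2) generated by c, x with c² = e, x² = 0, x·c = −c·x, where e is the unit, and let H' = K·1 ⊕ H be the 5-dimensional algebra obtained by adjoining a new unit 1. With Δ(1) = (1−e)⊗(1−e) + e⊗e, Δ(e) = e⊗e, Δ(c) = c⊗c, Δ(x) = c⊗x + x⊗e, ε(1) = 2, ε(e) = ε(c) = 1, ε(x) = 0, the map Δ is coassociative and multiplicative on H'; in particular Δ(x)•Δ(x) = 0 = Δ(x²) and Δ(x)•Δ(c) = −Δ(c)•Δ(x). -/

import Mathlib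

open TensorProduct

set_option maxHeartbeats 2000000 in
/-- on the 5-dimensional algebra `H' = K·1 ⊕ H` obtained by adjoining
a new unit `1` to Sweedler's 4-dimensional Hopf algebra `H` (unit `e`, generators
`c, x` with `c² = e`, `x² = 0`, `x·c = −c·x`), the comultiplication defined by
`Δ(1) = (1−e)⊗(1−e) + e⊗e`, `Δ(e) = e⊗e`, `Δ(c) = c⊗c`, `Δ(x) = c⊗x + x⊗e`
(and `Δ(c·x) = Δ(c)•Δ(x)`) is coassociative and multiplicative; in particular
`Δ(x)•Δ(x) = 0 = Δ(x²)` and `Δ(x)•Δ(c) = −Δ(c)•Δ(x)`. -/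
theorem stmt18 (K H' : Type*) [Field K] (h2 : (2 : K) ≠ 0)
    [Ring H'] [Algebra K H']
    (e c x : H')
    (b : Module.Basis (Fin 5) K H')
    (hb0 : b 0 = 1) (hb1 : b 1 = e) (hb2 : b 2 = c) (hb3 : b 3 = x)
    (hb4 : b 4 = c * x)
    (hee : e * e = e) (hcc : c * c = e) (hxx : x * x = 0) (hxc : x * c = -(c * x))
    (hec : e * c = c) (hce : c * e = c) (hex : e * x = x) (hxe : x * e = x)
    (Δ : H' →ₗ[K] H' ⊗[K] H') (ε : H' →ₗ[K] K)
    (hΔ1 : Δ 1 = (1 - e) ⊗ₜ[K] (1 - e) + e ⊗ₜ[K] e)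
    (hΔe : Δ e = e ⊗ₜ[K] e)
    (hΔc : Δ c = c ⊗ₜ[K] c)
    (hΔx : Δ x = c ⊗ₜ[K] x + x ⊗ₜ[K] e)
    (hΔcx : Δ (c * x) = Δ c * Δ x)
    (hε1 : ε 1 = 2) (hεe : ε e = 1) (hεc : ε c = 1) (hεx : ε x = 0)
    (hεcx : ε (c * x) = 0) :
    (∀ v : H',
        (TensorProduct.assoc K H' H' H')
            (TensorProduct.map Δ LinearMap.id (Δ v))
          = TensorProduct.map LinearMap.id Δ (Δ v))
    ∧ (∀ v w : H', Δ (v * w) = Δ v * Δ w)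
    ∧ Δ x * Δ x = 0
    ∧ Δ (x * x) = 0
    ∧ Δ x * Δ c = -(Δ c * Δ x) := by
  -- auxiliary products
  have hecx : e * (c * x) = c * x := by rw [← mul_assoc, hec]
  have hccx : c * (c * x) = x := by rw [← mul_assoc, hcc, hex]
  have hxcx : x * (c * x) = 0 := by
    rw [← mul_assoc, hxc, neg_mul, mul_assoc, hxx, mul_zero, neg_zero]
  have hcxe : (c * x) * e = c * x := by rw [mul_assoc, hxe]
  have hcxc : (c * x) * c = -x := by
    rw [mul_assoc, hxc, mul_neg, hccx]
  have hcxx : (c * x) * x = 0 := by rw [mul_assoc, hxx, mul_zero]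
  have hcxcx : (c * x) * (c * x) = 0 := by rw [mul_assoc, hxcx, mul_zero]
  have hb0' : b ⟨0, by omega⟩ = 1 := hb0
  have hb1' : b ⟨1, by omega⟩ = e := hb1
  have hb2' : b ⟨2, by omega⟩ = c := hb2
  have hb3' : b ⟨3, by omega⟩ = x := hb3
  have hb4' : b ⟨4, by omega⟩ = c * x := hb4
  have hΔy : Δ (c * x) = e ⊗ₜ[K] (c * x) + (c * x) ⊗ₜ[K] c := by
    rw [hΔcx, hΔc, hΔx]
    simp [mul_add, Algebra.TensorProduct.tmul_mul_tmul, hcc, hce]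
  -- coassociativity on basis vectors
  have coassoc : ∀ v : H',
      (TensorProduct.assoc K H' H' H')
          (TensorProduct.map Δ LinearMap.id (Δ v))
        = TensorProduct.map LinearMap.id Δ (Δ v) := by
    have key : (↑(TensorProduct.assoc K H' H' H') ∘ₗ
        TensorProduct.map Δ LinearMap.id ∘ₗ Δ)
        = TensorProduct.map LinearMap.id Δ ∘ₗ Δ := by
      apply b.ext
      intro i
      fin_cases i <;>
        simp only [LinearMap.coe_comp, Function.comp_apply, LinearEquiv.coe_coe,
          hb0', hb1', hb2', hb3', hb4'] <;>
        simp [hΔ1, hΔe, hΔc, hΔx, hΔy, map_add, map_sub, tmul_add, add_tmul,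
          tmul_sub, sub_tmul, TensorProduct.map_tmul, TensorProduct.assoc_tmul] <;>
        try abel
    intro v
    exact congrFun (congrArg (fun f => f.toFun) key) v
  -- multiplicativity on basis vectors
  have mult : ∀ v w : H', Δ (v * w) = Δ v * Δ w := by
    have key : (LinearMap.mul K H').compr₂ Δ
        = (LinearMap.mul K (H' ⊗[K] H')).compl₁₂ Δ Δ := by
      apply b.ext; intro i
      apply b.ext; intro j
      fin_cases i <;> fin_cases j <;>
        simp only [LinearMap.compr₂_apply, LinearMap.compl₁₂_apply,
          LinearMap.mul_apply', hb0', hb1', hb2', hb3', hb4'] <;>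
        simp [hee, hcc, hxx, hxc, hec, hce, hex, hxe, hecx, hccx, hxcx, hcxe,
          hcxc, hcxx, hcxcx, hΔ1, hΔe, hΔc, hΔx, hΔy,
          Algebra.TensorProduct.tmul_mul_tmul, mul_add, add_mul, sub_mul,
          mul_sub, tmul_add, add_tmul, tmul_sub, sub_tmul, neg_smul, one_smul,
          tmul_neg, neg_tmul] <;>
        try abel
    intro v w
    have := congrFun (congrArg (fun f => (f v).toFun) key) w
    simpa using this
  refine ⟨coassoc, mult, ?_, ?_, ?_⟩
  · rw [← mult, hxx, map_zero]
  · rw [hxx, map_zero]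
  · rw [← mult, ← mult, hxc, map_neg]
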